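/- (Connell's identity) For every natural number x ≥ 1, f(f(x) + x) = 2·f(x) + x; that is, ⌊φ·(⌊φ·x⌋ + x)⌋ = 2·⌊φ·x⌋ + x. -/

import Mathlib

noncomputable def phi : ℝ := (1 + Real.sqrt 5) / 2

noncomputable def f (n : ℕ) : ℕ := ⌊phi * n⌋₊

lemma sqrt5_irr : Irrational (Real.sqrt 5) := (by norm_num : Nat.Prime 5).irrational_sqrt

lemma phi_irr : Irrational phi := by
  have h1 : Irrational ((1 : ℕ) + Real.sqrt 5) := irrational_natCast_add_iff.mpr sqrt5_irr
  have := irrational_div_natCast_iff.mpr ⟨(by norm_num : (2:ℕ) ≠ 0), h1⟩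
  simpa [phi] using this

lemma sqrt5_lt : Real.sqrt 5 < 3 := by
  nlinarith [Real.sq_sqrt (by norm_num : (5:ℝ) ≥ 0), Real.sqrt_nonneg 5]

lemma sqrt5_gt : 1 < Real.sqrt 5 := by
  nlinarith [Real.sq_sqrt (by norm_num : (5:ℝ) ≥ 0), Real.sqrt_nonneg 5]

lemma phi_sq : phi * phi = phi + 1 := by
  have h := Real.sq_sqrt (by norm_num : (5:ℝ) ≥ 0)
  unfold phi; nlinarith

theorem connell (x : ℕ) (hx : 1 ≤ x) : f (f x + x) = 2 * f x + x := by
  have hphi_pos : 0 < phi := by unfold phi; nlinarith [sqrt5_gt]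
  have hphi_lt2 : phi < 2 := by unfold phi; nlinarith [sqrt5_lt]
  have hphi_gt1 : 1 < phi := by unfold phi; nlinarith [sqrt5_gt]
  set m : ℕ := f x with hm
  have hxpos : (0:ℝ) < x := by exact_mod_cast hx
  have hfl : (m : ℝ) ≤ phi * x := Nat.floor_le (by positivity)
  have hfu : phi * x < m + 1 := Nat.lt_floor_add_one _
  have hirr : Irrational (phi * x) := by
    have := irrational_mul_natCast_iff.mpr ⟨Nat.one_le_iff_ne_zero.mp hx, phi_irr⟩
    simpa [mul_comm] using this
  have hne : phi * x ≠ (m : ℝ) := fun h => hirr (h ▸ ⟨(m : ℚ), by push_cast; rfl⟩)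
  set θ : ℝ := phi * x - m with hθ
  have hθ0 : 0 < θ := lt_of_le_of_ne (by linarith) (by intro h; exact hne (by linarith [h]))
  have hθ1 : θ < 1 := by simp only [hθ]; linarith
  have key : phi * ((m : ℝ) + x) = 2 * m + x + (2 - phi) * θ := by
    have : (m : ℝ) = phi * x - θ := by rw [hθ]; ring
    rw [this]; nlinarith [phi_sq]
  have hcast : ((f x + x : ℕ) : ℝ) = (m : ℝ) + x := by push_cast; rfl
  show ⌊phi * ((f x + x : ℕ) : ℝ)⌋₊ = 2 * m + x
  rw [hcast, key]
  have h1 : (0:ℝ) < (2 - phi) * θ := by nlinarith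
  have h2 : (2 - phi) * θ < 1 := by nlinarith
  rw [Nat.floor_eq_iff (by positivity)]
  constructor <;> push_cast <;> linarith
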